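/- Let X and Y be real inner product spaces of the same finite dimension d, and let T : X → Y be a linear operator. For every ε > 0, the covering number satisfies 𝒞(ε, T) ≥ √(det(T*T)) · (1/ε)^d, where T* is the adjoint of T and det(T*T) is the determinant of the endomorphism T*T of X. -/

import Mathlib

open Metric
open scoped ENNReal

/-- The covering number of a set `A` in a metric space: the minimal number (in `ℕ∞`) of balls
of radius `ε` needed to cover `A`. -/
noncomputable def coveringNumber {X : Type*} [PseudoMetricSpace X] (ε : ℝ) (A : Set X) : ℕ∞ :=
  sInf {n : ℕ∞ | ∃ t : Finset X, (t.card : ℕ∞) = n ∧ A ⊆ ⋃ c ∈ t, Metric.closedBall c ε}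

section aux

open MeasureTheory

variable {X Y : Type*}
    [NormedAddCommGroup X] [InnerProductSpace ℝ X] [FiniteDimensional ℝ X]
    [NormedAddCommGroup Y] [InnerProductSpace ℝ Y] [FiniteDimensional ℝ Y]

/-- det of the adjoint of an endomorphism of Euclidean space equals its det. -/
lemma det_adjoint_eq {n : ℕ} (S : EuclideanSpace ℝ (Fin n) →ₗ[ℝ] EuclideanSpace ℝ (Fin n)) :
    LinearMap.det (LinearMap.adjoint S) = LinearMap.det S := by
  have b := EuclideanSpace.basisFun (Fin n) ℝ
  rw [← LinearMap.det_toMatrix b.toBasis, ← LinearMap.det_toMatrix b.toBasis (f := S),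
    LinearMap.toMatrix_adjoint b b, Matrix.det_conjTranspose]
  simp

lemma adjoint_conj {n : ℕ} (eX : X ≃ₗᵢ[ℝ] EuclideanSpace ℝ (Fin n))
    (eY : Y ≃ₗᵢ[ℝ] EuclideanSpace ℝ (Fin n)) (T : X →ₗ[ℝ] Y) :
    LinearMap.adjoint ((eY.toLinearEquiv : Y →ₗ[ℝ] EuclideanSpace ℝ (Fin n)) ∘ₗ T ∘ₗ
        (eX.symm.toLinearEquiv : EuclideanSpace ℝ (Fin n) →ₗ[ℝ] X)) =
      (eX.toLinearEquiv : X →ₗ[ℝ] EuclideanSpace ℝ (Fin n)) ∘ₗ (LinearMap.adjoint T) ∘ₗ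
        (eY.symm.toLinearEquiv : EuclideanSpace ℝ (Fin n) →ₗ[ℝ] Y) := by
  symm
  rw [LinearMap.eq_adjoint_iff]
  intro x y
  simp only [LinearMap.coe_comp, Function.comp_apply, LinearEquiv.coe_coe,
    LinearIsometryEquiv.coe_toLinearEquiv]
  calc inner ℝ (eX ((LinearMap.adjoint T) (eY.symm x))) y
      = inner ℝ ((LinearMap.adjoint T) (eY.symm x)) (eX.symm y) := by
        rw [← eX.inner_map_map ((LinearMap.adjoint T) (eY.symm x)) (eX.symm y),
          eX.apply_symm_apply]
    _ = inner ℝ (eY.symm x) (T (eX.symm y)) := LinearMap.adjoint_inner_left T _ _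
    _ = inner ℝ x (eY (T (eX.symm y))) := by
        rw [← eY.inner_map_map (eY.symm x) (T (eX.symm y)), eY.apply_symm_apply]

end aux

/-- Let `X`, `Y` be real inner product spaces of the same finite dimension `d`
and `T : X → Y` a linear operator. For every `ε > 0`,
`𝒞(ε, T) ≥ √(det(T*T)) * (1/ε)^d`, where `T*` is the adjoint of `T`. -/
theorem coveringNumber_ge_det {X Y : Type*}
    [NormedAddCommGroup X] [InnerProductSpace ℝ X] [FiniteDimensional ℝ X]
    [NormedAddCommGroup Y] [InnerProductSpace ℝ Y] [FiniteDimensional ℝ Y]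
    (d : ℕ) (hdX : Module.finrank ℝ X = d) (hdY : Module.finrank ℝ Y = d)
    (T : X →ₗ[ℝ] Y) (ε : ℝ) (hε : 0 < ε) :
    ENNReal.ofReal (Real.sqrt (LinearMap.det ((LinearMap.adjoint T) ∘ₗ T)) * (1 / ε) ^ d) ≤
      (coveringNumber ε (T '' Metric.closedBall 0 1) : ℝ≥0∞) := by
  classical
  open MeasureTheory in
  -- set up isometries with Euclidean space
  set E := EuclideanSpace ℝ (Fin d) with hE
  let eX : X ≃ₗᵢ[ℝ] E := ((stdOrthonormalBasis ℝ X).reindex (finCongr hdX)).repr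
  let eY : Y ≃ₗᵢ[ℝ] E := ((stdOrthonormalBasis ℝ Y).reindex (finCongr hdY)).repr
  set S : E →ₗ[ℝ] E := (eY.toLinearEquiv : Y →ₗ[ℝ] E) ∘ₗ T ∘ₗ
    (eX.symm.toLinearEquiv : E →ₗ[ℝ] X) with hS
  -- determinant computation
  have hdet : LinearMap.det ((LinearMap.adjoint T) ∘ₗ T) = (LinearMap.det S) ^ 2 := by
    have h1 : LinearMap.det (LinearMap.adjoint S ∘ₗ S) = (LinearMap.det S) ^ 2 := by
      rw [LinearMap.det_comp, det_adjoint_eq, sq]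
    have hconj : LinearMap.adjoint S ∘ₗ S =
        (eX.toLinearEquiv : X →ₗ[ℝ] E) ∘ₗ ((LinearMap.adjoint T) ∘ₗ T) ∘ₗ
        (eX.symm.toLinearEquiv : E →ₗ[ℝ] X) := by
      rw [hS, adjoint_conj eX eY T]
      ext v
      simp
    rw [← h1, hconj]
    exact (LinearMap.det_conj ((LinearMap.adjoint T) ∘ₗ T) eX.toLinearEquiv).symm
  have hsqrt : Real.sqrt (LinearMap.det ((LinearMap.adjoint T) ∘ₗ T)) = |LinearMap.det S| := by
    rw [hdet, Real.sqrt_sq_eq_abs]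
  -- the key bound for any covering finset
  have key : ∀ t : Finset Y, (T '' Metric.closedBall 0 1 ⊆ ⋃ c ∈ t, Metric.closedBall c ε) →
      ENNReal.ofReal (Real.sqrt (LinearMap.det ((LinearMap.adjoint T) ∘ₗ T)) * (1 / ε) ^ d) ≤
        (t.card : ℝ≥0∞) := by
    intro t ht
    have hdE : Module.finrank ℝ E = d := finrank_euclideanSpace_fin
    set V : ℝ≥0∞ := volume (Metric.closedBall (0 : E) 1) with hV
    have hV0 : V ≠ 0 := by
      refine (measure_pos_of_superset (ball_subset_closedBall) ?_).ne'
      exact (measure_ball_pos volume 0 one_pos).ne'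
    have hVtop : V ≠ ⊤ := measure_closedBall_lt_top.ne
    -- image of the ball under S
    have himg : S '' Metric.closedBall 0 1 = eY '' (T '' Metric.closedBall 0 1) := by
      have h1 : (eX.symm : E → X) '' Metric.closedBall 0 1 = Metric.closedBall 0 1 := by
        rw [eX.symm.image_closedBall, map_zero]
      have h2 : (⇑S : E → E) = (eY : Y → E) ∘ (T : X → Y) ∘ (eX.symm : E → X) := by
        rw [hS]; rfl
      rw [h2, Set.image_comp, Set.image_comp, h1]
    have hmeas : volume (S '' Metric.closedBall 0 1) = ENNReal.ofReal |LinearMap.det S| * V :=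
      Measure.addHaar_image_linearMap volume S _
    have hsubset : S '' Metric.closedBall 0 1 ⊆ ⋃ c ∈ t, Metric.closedBall (eY c) ε := by
      rw [himg]
      intro x hx
      obtain ⟨y, hy, rfl⟩ := hx
      obtain ⟨c, hc, hyc⟩ := Set.mem_iUnion₂.1 (ht hy)
      exact Set.mem_iUnion₂.2 ⟨c, hc, by
        simpa [Metric.mem_closedBall, eY.dist_map] using hyc⟩
    have hbound : ENNReal.ofReal |LinearMap.det S| * V ≤
        (t.card : ℝ≥0∞) * (ENNReal.ofReal (ε ^ d) * V) := by
      rw [← hmeas]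
      calc volume (S '' Metric.closedBall 0 1)
          ≤ volume (⋃ c ∈ t, Metric.closedBall (eY c) ε) := measure_mono hsubset
        _ ≤ ∑ c ∈ t, volume (Metric.closedBall (eY c) ε) := measure_biUnion_finset_le t _
        _ = ∑ c ∈ t, ENNReal.ofReal (ε ^ d) * V := by
            refine Finset.sum_congr rfl fun c _ => ?_
            rw [Measure.addHaar_closedBall' volume _ hε.le, hdE]
        _ = (t.card : ℝ≥0∞) * (ENNReal.ofReal (ε ^ d) * V) := by
            rw [Finset.sum_const, nsmul_eq_mul]
    have hbound2 : ENNReal.ofReal |LinearMap.det S| ≤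
        (t.card : ℝ≥0∞) * ENNReal.ofReal (ε ^ d) := by
      rw [← mul_assoc] at hbound
      exact (ENNReal.mul_le_mul_iff_left hV0 hVtop).1 hbound
    rw [hsqrt, ENNReal.ofReal_mul (abs_nonneg _)]
    calc ENNReal.ofReal |LinearMap.det S| * ENNReal.ofReal ((1 / ε) ^ d)
        ≤ (t.card : ℝ≥0∞) * ENNReal.ofReal (ε ^ d) * ENNReal.ofReal ((1 / ε) ^ d) :=
          mul_le_mul_left hbound2 _
      _ = (t.card : ℝ≥0∞) := by
          rw [mul_assoc, ← ENNReal.ofReal_mul (by positivity), ← mul_pow]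
          rw [mul_one_div_cancel hε.ne', one_pow, ENNReal.ofReal_one, mul_one]
  -- conclude
  rw [_root_.coveringNumber]
  rcases Set.eq_empty_or_nonempty {n : ℕ∞ | ∃ t : Finset Y, (t.card : ℕ∞) = n ∧
      T '' Metric.closedBall 0 1 ⊆ ⋃ c ∈ t, Metric.closedBall c ε} with h | h
  · rw [h, sInf_empty]
    simp
  · obtain ⟨t, hcard, hcover⟩ := csInf_mem h
    rw [← hcard]
    simpa using key t hcover
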